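/- Let f : ℝ⁴ → ℝ be differentiable, fix t, s, and set F(u,v,w) = f(u − t v, s u − s t v − t w, v, s v + w). For u ≠ 0 one has ∂₂f − (1/u)·(∂F/∂s) = −(v/u)·(∂F/∂w), where ∂₂f is evaluated at (u − t v, s u − s t v − t w, v, s v + w) and ∂F/∂s denotes the derivative of f(u − t v, s u − s t v − t w, v, s v + w) with respect to the parameter s. -/

import Mathlib

theorem stmt5 (f : ℝ × ℝ × ℝ × ℝ → ℝ) (hf : Differentiable ℝ f)
    (t s u v w : ℝ) (hu : u ≠ 0) :
    fderiv ℝ f (u - t*v, s*u - s*t*v - t*w, v, s*v + w) (0,1,0,0)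
      - (1/u) * deriv (fun s' : ℝ => f (u - t*v, s'*u - s'*t*v - t*w, v, s'*v + w)) s =
    -(v/u) * deriv (fun w' : ℝ => f (u - t*v, s*u - s*t*v - t*w', v, s*v + w')) w := by
  set p : ℝ × ℝ × ℝ × ℝ := (u - t*v, s*u - s*t*v - t*w, v, s*v + w) with hp
  set D := fderiv ℝ f p with hD
  have hφs : HasDerivAt (fun s' : ℝ => ((u - t*v, s'*u - s'*t*v - t*w, v, s'*v + w) : ℝ × ℝ × ℝ × ℝ)) (0, u - t*v, 0, v) s := by
    refine (hasDerivAt_const s _).prodMk (HasDerivAt.prodMk ?_ ((hasDerivAt_const s _).prodMk ?_))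
    · have h1 : HasDerivAt (fun s' : ℝ => s'*u - s'*t*v - t*w) (u - t*v - 0) s := by
        simpa using (((hasDerivAt_id s).mul_const u).sub
          (((hasDerivAt_id s).mul_const t).mul_const v)).sub_const (t*w)
      simpa using h1
    · have h2 : HasDerivAt (fun s' : ℝ => s'*v + w) v s := by
        simpa using ((hasDerivAt_id s).mul_const v).add_const w
      exact h2
  have hφw : HasDerivAt (fun w' : ℝ => ((u - t*v, s*u - s*t*v - t*w', v, s*v + w') : ℝ × ℝ × ℝ × ℝ)) (0, -t, 0, 1) w := by
    refine (hasDerivAt_const w _).prodMk (HasDerivAt.prodMk ?_ ((hasDerivAt_const w _).prodMk ?_))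
    · have h1 : HasDerivAt (fun w' : ℝ => s*u - s*t*v - t*w') (0 - t*1) w := by
        exact (hasDerivAt_const w (s*u - s*t*v)).sub ((hasDerivAt_id' w).const_mul t)
      simpa using h1
    · simpa using (hasDerivAt_id w).const_add (s*v)
  have hds : deriv (fun s' : ℝ => f (u - t*v, s'*u - s'*t*v - t*w, v, s'*v + w)) s
      = D (0, u - t*v, 0, v) := by
    have := ((hf p).hasFDerivAt.comp_hasDerivAt s hφs)
    exact this.deriv
  have hdw : deriv (fun w' : ℝ => f (u - t*v, s*u - s*t*v - t*w', v, s*v + w')) w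
      = D (0, -t, 0, 1) := by
    have := ((hf p).hasFDerivAt.comp_hasDerivAt w hφw)
    exact this.deriv
  rw [hds, hdw]
  have e1 : ((0, u - t*v, 0, v) : ℝ × ℝ × ℝ × ℝ)
      = (u - t*v) • (0,1,0,0) + v • (0,0,0,1) := by
    simp [Prod.ext_iff]
  have e2 : ((0, -t, 0, 1) : ℝ × ℝ × ℝ × ℝ)
      = (-t) • (0,1,0,0) + (1:ℝ) • (0,0,0,1) := by
    simp [Prod.ext_iff]
  rw [e1, e2, map_add, map_add, map_smul, map_smul, map_smul, map_smul]
  simp only [smul_eq_mul]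
  field_simp
  ring
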